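/- Let q ≥ 2 be a real number, v(s) := (1/q − 1/2)((π−s)/π)³ + (1/q)(s−π)/π + 1/2, and w(s) := 2π v(s)^q / (v(s)^q + v(2π−s)^q). Then w is strictly increasing on [0,2π]: for 0 ≤ s < t ≤ 2π one has w(s) < w(t). In particular w maps [0,2π] bijectively onto [0,2π], so it is a valid reparametrization of a boundary segment. -/
import Mathlib

open Real

/-- The Kress grading auxiliary function
`v(s) = (1/q − 1/2)((π−s)/π)³ + (1/q)(s−π)/π + 1/2`. -/
noncomputable def kressV (q : ℝ) (s : ℝ) : ℝ :=
  (1 / q - 1 / 2) * ((π - s) / π) ^ 3 + (1 / q) * (s - π) / π + 1 / 2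

/-- The Kress corner-grading function `w(s) = 2π v(s)^q / (v(s)^q + v(2π−s)^q)`,
where `v(s)^q` is the real power of `v(s)`. -/
noncomputable def kressW (q : ℝ) (s : ℝ) : ℝ :=
  2 * π * kressV q s ^ q / (kressV q s ^ q + kressV q (2 * π - s) ^ q)

lemma kressV_symm (q s : ℝ) : kressV q (2 * π - s) = 1 - kressV q s := by
  unfold kressV
  have hπ : (π : ℝ) ≠ 0 := Real.pi_ne_zero
  field_simp
  ring

lemma kressV_zero (q : ℝ) : kressV q 0 = 0 := by
  unfold kressV
  have h1 : (π - 0) / π = 1 := by rw [sub_zero, div_self Real.pi_ne_zero]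
  have h2 : (0 - π) / π = -1 := by rw [zero_sub, neg_div, div_self Real.pi_ne_zero]
  rw [h1, mul_div_assoc, h2]
  ring

lemma kressV_two_pi (q : ℝ) : kressV q (2 * π) = 1 := by
  have := kressV_symm q 0
  rw [kressV_zero] at this
  simpa using this

lemma kressV_strictMono (q : ℝ) (hq : 2 ≤ q) : StrictMono (kressV q) := by
  intro s t hst
  unfold kressV
  have hπ : (0:ℝ) < π := Real.pi_pos
  have hd : (0:ℝ) < 1 / q := by positivity
  have hc : (0:ℝ) ≤ 1 / 2 - 1 / q := by
    have : 1 / q ≤ 1 / 2 := by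
      apply div_le_div_of_nonneg_left (by norm_num) (by norm_num) hq
    linarith
  set a := (s - π) / π with ha
  set b := (t - π) / π with hb
  have hab : a < b := by
    apply div_lt_div_of_pos_right _ hπ
    linarith
  have h1 : (π - s) / π = -a := by rw [ha]; ring
  have h2 : (π - t) / π = -b := by rw [hb]; ring
  rw [h1, h2]
  have hcube : a ^ 3 ≤ b ^ 3 := by
    nlinarith [sq_nonneg (a + b), sq_nonneg (a - b), sq_nonneg a, sq_nonneg b]
  have : (1 / q) * (s - π) / π = (1 / q) * a := by rw [ha]; ring
  rw [this]
  have : (1 / q) * (t - π) / π = (1 / q) * b := by rw [hb]; ring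
  rw [this]
  have e1 : (1 / q - 1 / 2) * (-a) ^ 3 = (1 / 2 - 1 / q) * a ^ 3 := by ring
  have e2 : (1 / q - 1 / 2) * (-b) ^ 3 = (1 / 2 - 1 / q) * b ^ 3 := by ring
  rw [e1, e2]
  nlinarith [mul_le_mul_of_nonneg_left hcube hc, mul_lt_mul_of_pos_left hab hd]

lemma kress_den_pos (q : ℝ) (hq : 2 ≤ q) {u : ℝ} (h0 : 0 ≤ u) (h1 : u ≤ 1) :
    0 < u ^ q + (1 - u) ^ q := by
  rcases lt_or_eq_of_le h1 with h | h
  · have : (0:ℝ) < (1 - u) ^ q := Real.rpow_pos_of_pos (by linarith) q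
    have : (0:ℝ) ≤ u ^ q := Real.rpow_nonneg h0 q
    linarith [Real.rpow_pos_of_pos (show (0:ℝ) < 1 - u by linarith) q]
  · have : (0:ℝ) < u ^ q := Real.rpow_pos_of_pos (by linarith) q
    linarith [Real.rpow_nonneg (show (0:ℝ) ≤ 1 - u by linarith) q]

lemma kress_core (q : ℝ) (hq : 2 ≤ q) {a b : ℝ} (ha : 0 ≤ a) (hb : b ≤ 1) (hab : a < b) :
    a ^ q / (a ^ q + (1 - a) ^ q) < b ^ q / (b ^ q + (1 - b) ^ q) := by
  have hq0 : (0:ℝ) < q := by linarith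
  have ha1 : a ≤ 1 := by linarith
  have hb0 : 0 ≤ b := by linarith
  have hda : 0 < a ^ q + (1 - a) ^ q := kress_den_pos q hq ha ha1
  have hdb : 0 < b ^ q + (1 - b) ^ q := kress_den_pos q hq hb0 hb
  rw [div_lt_div_iff₀ hda hdb]
  have hpow : a ^ q < b ^ q := Real.rpow_lt_rpow ha hab hq0
  have key : a ^ q * (1 - b) ^ q < b ^ q * (1 - a) ^ q := by
    rcases lt_or_eq_of_le hb with h | h
    · have h1b : (0:ℝ) < (1 - b) ^ q := Real.rpow_pos_of_pos (by linarith) q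
      have h1ab : (1 - b) ^ q ≤ (1 - a) ^ q :=
        Real.rpow_le_rpow (by linarith) (by linarith) hq0.le
      calc a ^ q * (1 - b) ^ q < b ^ q * (1 - b) ^ q :=
            mul_lt_mul_of_pos_right hpow h1b
        _ ≤ b ^ q * (1 - a) ^ q :=
            mul_le_mul_of_nonneg_left h1ab (Real.rpow_nonneg hb0 q)
    · subst h
      simp only [sub_self, Real.zero_rpow (ne_of_gt hq0), mul_zero]
      have : (0:ℝ) < (1 - a) ^ q := Real.rpow_pos_of_pos (by linarith) q
      have hbq : (0:ℝ) < (1:ℝ) ^ q := Real.rpow_pos_of_pos one_pos q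
      positivity
  nlinarith [key, hpow]

lemma kressW_eq (q s : ℝ) :
    kressW q s = 2 * π * (kressV q s ^ q / (kressV q s ^ q + (1 - kressV q s) ^ q)) := by
  rw [kressW, kressV_symm, mul_div_assoc]

lemma kressW_zero (q : ℝ) (hq : 2 ≤ q) : kressW q 0 = 0 := by
  rw [kressW_eq, kressV_zero, Real.zero_rpow (by linarith : q ≠ 0)]
  simp

lemma kressW_two_pi (q : ℝ) (hq : 2 ≤ q) : kressW q (2 * π) = 2 * π := by
  rw [kressW_eq, kressV_two_pi, Real.one_rpow]
  norm_num [Real.zero_rpow (by linarith : q ≠ 0)]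

lemma kressW_strictMonoOn (q : ℝ) (hq : 2 ≤ q) :
    StrictMonoOn (kressW q) (Set.Icc 0 (2 * π)) := by
  intro s hs t ht hst
  rw [kressW_eq, kressW_eq]
  have hv := kressV_strictMono q hq
  have ha : 0 ≤ kressV q s := by
    have := hv.monotone hs.1
    rwa [kressV_zero] at this
  have hb : kressV q t ≤ 1 := by
    have := hv.monotone ht.2
    rwa [kressV_two_pi] at this
  exact mul_lt_mul_of_pos_left (kress_core q hq ha hb (hv hst)) (by positivity)

lemma kressW_continuous (q : ℝ) (hq : 2 ≤ q) :
    ContinuousOn (kressW q) (Set.Icc 0 (2 * π)) := by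
  have hq0 : (0:ℝ) ≤ q := by linarith
  have hv : Continuous (kressV q) := by unfold kressV; fun_prop
  have h1 : Continuous fun s => kressV q s ^ q :=
    hv.rpow_const fun x => Or.inr hq0
  have h2 : Continuous fun s => kressV q (2 * π - s) ^ q :=
    (hv.comp (by continuity)).rpow_const fun x => Or.inr hq0
  apply ContinuousOn.div
  · exact (continuous_const.mul h1).continuousOn
  · exact (h1.add h2).continuousOn
  · intro x hx
    rw [kressV_symm]
    have hvm := kressV_strictMono q hq
    have ha : 0 ≤ kressV q x := by
      have := hvm.monotone hx.1; rwa [kressV_zero] at this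
    have hb : kressV q x ≤ 1 := by
      have := hvm.monotone hx.2; rwa [kressV_two_pi] at this
    exact ne_of_gt (kress_den_pos q hq ha hb)

/-- For real `q ≥ 2`, the Kress grading function `w` is strictly increasing on `[0, 2π]`:
for `0 ≤ s < t ≤ 2π` one has `w(s) < w(t)`.  In particular `w` maps `[0, 2π]` bijectively
onto `[0, 2π]`, so it is a valid reparametrization of a boundary segment. -/
theorem kressW_strictMono_bijective (q : ℝ) (hq : 2 ≤ q) :
    StrictMonoOn (kressW q) (Set.Icc 0 (2 * π)) ∧
      Set.BijOn (kressW q) (Set.Icc 0 (2 * π)) (Set.Icc 0 (2 * π)) := by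
  have hmono := kressW_strictMonoOn q hq
  have hπ : (0:ℝ) ≤ 2 * π := by positivity
  have h0 : (0:ℝ) ∈ Set.Icc (0:ℝ) (2 * π) := by constructor <;> simp [hπ]
  have h2 : (2 * π) ∈ Set.Icc (0:ℝ) (2 * π) := by constructor <;> simp [hπ]
  refine ⟨hmono, ?_, hmono.injOn, ?_⟩
  · intro x hx
    constructor
    · have := hmono.monotoneOn h0 hx hx.1
      rwa [kressW_zero q hq] at this
    · have := hmono.monotoneOn hx h2 hx.2
      rwa [kressW_two_pi q hq] at this
  · have := intermediate_value_Icc hπ (kressW_continuous q hq)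
    rw [kressW_zero q hq, kressW_two_pi q hq] at this
    exact this
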